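/- For positive integers m ≥ 1, a ≥ 2, b > a, n ≥ 1, consider the graph H with vertex set V(K_{m(a−1)}) ∪ {v_1,...,v_{mb+1}} ∪ V(K_{(mb+1)(a−1+n)}), where all edges inside the two cliques are present, every v_i is joined to all vertices of K_{m(a−1)}, and each v_i is joined to a distinct vertex u_i of K_{(mb+1)(a−1+n)}. Then for any n-subset V_0 of V(K_{(mb+1)(a−1+n)}) \ {u_1,...,u_{mb+1}}, the graph H − V_0 has no [a,b]-factor. -/

import Mathlib

open Finset
open scoped Classical

/-- Degree of a vertex in a simple graph (as `Set.ncard` of its neighbor set). -/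
noncomputable def deg {W : Type*} (G : SimpleGraph W) (v : W) : ℕ := (G.neighborSet v).ncard

/-- `G` has an `[a,b]`-factor: a spanning subgraph `H ≤ G` with `a ≤ deg_H v ≤ b` for all `v`. -/
def HasABFactor {W : Type*} (G : SimpleGraph W) (a b : ℕ) : Prop :=
  ∃ H : SimpleGraph W, H ≤ G ∧ ∀ v, a ≤ deg H v ∧ deg H v ≤ b

/-- Degree of `x` in `G - S` (neighbors of `x` outside `S`). -/
noncomputable def degS {W : Type*} (G : SimpleGraph W) (S : Set W) (x : W) : ℕ :=
  (G.neighborSet x \ S).ncard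

/-- Number of isolated vertices of `G - S`. -/
noncomputable def nIso {W : Type*} (G : SimpleGraph W) (S : Set W) : ℕ :=
  {x | x ∉ S ∧ degS G S x = 0}.ncard

/-- `d_{G-S}(T)`: sum of degrees in `G - S` of the vertices of `T`. -/
noncomputable def dSum {W : Type*} (G : SimpleGraph W) (S T : Set W) : ℕ :=
  ∑ᶠ x ∈ T, degS G S x

/-- `T = {x ∈ V(G) - S : d_{G-S}(x) ≤ a - 1}`. -/
def Tset {W : Type*} (G : SimpleGraph W) (S : Set W) (a : ℕ) : Set W :=
  {x | x ∉ S ∧ degS G S x ≤ a - 1}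

/-- Isolated toughness of a graph. -/
noncomputable def isoT {W : Type*} [Fintype W] (G : SimpleGraph W) : ℝ :=
  if G = ⊤ then (Fintype.card W : ℝ) - 1
  else sInf {r : ℝ | ∃ S : Set W, 2 ≤ nIso G S ∧ r = (S.ncard : ℝ) / (nIso G S : ℝ)}

/-- Vertex set of the extremal graph `H`. -/
abbrev HV (m a b n : ℕ) : Type :=
  Fin (m * (a - 1)) ⊕ Fin (m * b + 1) ⊕ Fin ((m * b + 1) * (a - 1 + n))

/-- Defining relation of the extremal graph `H`: two cliques, the `v_i` joined to all of the
first clique, and `v_i` joined to `u_i` (the vertex of value `i` in the big clique). -/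
def Hrel (m a b n : ℕ) : HV m a b n → HV m a b n → Prop
  | Sum.inl _, Sum.inl _ => True
  | Sum.inl _, Sum.inr (Sum.inl _) => True
  | Sum.inr (Sum.inl i), Sum.inr (Sum.inr j) => (j : ℕ) = (i : ℕ)
  | Sum.inr (Sum.inr _), Sum.inr (Sum.inr _) => True
  | _, _ => False

/-- The extremal graph `H`. -/
def HGraph (m a b n : ℕ) : SimpleGraph (HV m a b n) := SimpleGraph.fromRel (Hrel m a b n)

theorem stmt_4 (m a b n : ℕ) (hm : 1 ≤ m) (ha : 2 ≤ a) (hab : a < b) (hn : 1 ≤ n)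
    (V0 : Set (HV m a b n)) (hcard : V0.ncard = n)
    (hsub : ∀ x ∈ V0, ∃ j : Fin ((m * b + 1) * (a - 1 + n)),
      x = Sum.inr (Sum.inr j) ∧ m * b + 1 ≤ (j : ℕ)) :
    ¬ HasABFactor (SimpleGraph.induce V0ᶜ (HGraph m a b n)) a b := by
  classical
  rintro ⟨F, hFle, hdeg⟩
  have hBmem : ∀ i : Fin (m*b+1), (Sum.inr (Sum.inl i) : HV m a b n) ∈ V0ᶜ := by
    intro i hmem
    obtain ⟨j, hj, _⟩ := hsub _ hmem
    simp at hj
  have hAmem : ∀ k : Fin (m*(a-1)), (Sum.inl k : HV m a b n) ∈ V0ᶜ := by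
    intro k hmem
    obtain ⟨j, hj, _⟩ := hsub _ hmem
    simp at hj
  have hK : m*b+1 ≤ (m*b+1)*(a-1+n) := Nat.le_mul_of_pos_right _ (by omega)
  have humem : ∀ i : Fin (m*b+1),
      (Sum.inr (Sum.inr ⟨(i:ℕ), lt_of_lt_of_le i.isLt hK⟩) : HV m a b n) ∈ V0ᶜ := by
    intro i hmem
    obtain ⟨j, hj, hge⟩ := hsub _ hmem
    have : (j : ℕ) = (i : ℕ) := by
      have := (Sum.inr_injective (Sum.inr_injective hj)).symm
      simpa using congrArg Fin.val this
    omega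
  let vB : Fin (m*b+1) → ↥V0ᶜ := fun i => ⟨Sum.inr (Sum.inl i), hBmem i⟩
  let vA : Fin (m*(a-1)) → ↥V0ᶜ := fun k => ⟨Sum.inl k, hAmem k⟩
  let u : Fin (m*b+1) → ↥V0ᶜ :=
    fun i => ⟨Sum.inr (Sum.inr ⟨(i:ℕ), lt_of_lt_of_le i.isLt hK⟩), humem i⟩
  have hvBinj : Function.Injective vB := by
    intro i j h
    have := congrArg Subtype.val h
    simpa [vB] using this
  have hdeg' : ∀ v, deg F v = (F.neighborFinset v).card := by
    intro v
    rw [deg, SimpleGraph.neighborFinset_def]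
    exact Set.ncard_eq_toFinset_card' _
  have hadjH : ∀ {x y : ↥V0ᶜ}, F.Adj x y → (HGraph m a b n).Adj x.val y.val := by
    intro x y h
    have := hFle h
    simpa using this
  -- edges from vB i into the A-clique
  let Ei : Fin (m*b+1) → Finset (Fin (m*(a-1))) :=
    fun i => univ.filter (fun k => F.Adj (vB i) (vA k))
  have hlow : ∀ i, a - 1 ≤ (Ei i).card := by
    intro i
    have hsub' : F.neighborFinset (vB i) ⊆ insert (u i) ((Ei i).image vA) := by
      intro w hw
      rw [SimpleGraph.mem_neighborFinset] at hw
      have hadj := hadjH hw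
      rw [HGraph, SimpleGraph.fromRel_adj] at hadj
      obtain ⟨wv, hwmem⟩ := w
      rcases wv with k | k | j
      · apply Finset.mem_insert_of_mem
        refine Finset.mem_image.2 ⟨k, ?_, ?_⟩
        · simp only [Ei, Finset.mem_filter, Finset.mem_univ, true_and]
          have hh : vA k = ⟨Sum.inl k, hwmem⟩ := rfl
          rw [hh]; exact hw
        · rfl
      · exfalso
        obtain ⟨hne, hrel⟩ := hadj
        simp [Hrel] at hrel
      · obtain ⟨hne, hrel⟩ := hadj
        have hji : (j : ℕ) = (i : ℕ) := by simpa [Hrel] using hrel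
        have heq : (⟨Sum.inr (Sum.inr j), hwmem⟩ : ↥V0ᶜ) = u i := by
          apply Subtype.ext
          simp only [u]
          exact congrArg (fun t => Sum.inr (Sum.inr t)) (Fin.ext hji)
        rw [heq]
        exact Finset.mem_insert_self _ _
    have h1 : (F.neighborFinset (vB i)).card ≤ (Ei i).card + 1 :=
      calc (F.neighborFinset (vB i)).card ≤ (insert (u i) ((Ei i).image vA)).card :=
            Finset.card_le_card hsub'
        _ ≤ ((Ei i).image vA).card + 1 := Finset.card_insert_le _ _
        _ ≤ (Ei i).card + 1 := by
            have := Finset.card_image_le (s := Ei i) (f := vA); omega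
    have h2 := (hdeg (vB i)).1
    rw [hdeg'] at h2
    omega
  have hup : ∀ k : Fin (m*(a-1)),
      (univ.filter (fun i => F.Adj (vB i) (vA k))).card ≤ b := by
    intro k
    have hle : (univ.filter (fun i => F.Adj (vB i) (vA k))).card
        ≤ (F.neighborFinset (vA k)).card := by
      apply Finset.card_le_card_of_injOn vB
      · intro i hi
        rw [Finset.mem_coe, Finset.mem_filter] at hi
        rw [Finset.mem_coe, SimpleGraph.mem_neighborFinset]
        exact hi.2.symm
      · exact hvBinj.injOn
    have h2 := (hdeg (vA k)).2
    rw [hdeg'] at h2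
    omega
  have hsum : ∑ i : Fin (m*b+1), (Ei i).card
      = ∑ k : Fin (m*(a-1)), (univ.filter (fun i => F.Adj (vB i) (vA k))).card := by
    simp only [Ei, Finset.card_filter]
    exact Finset.sum_comm
  have hL : (m*b+1) * (a-1) ≤ ∑ i : Fin (m*b+1), (Ei i).card := by
    calc (m*b+1)*(a-1) = ∑ _i : Fin (m*b+1), (a-1) := by
          simp [Finset.sum_const, mul_comm]
      _ ≤ _ := Finset.sum_le_sum fun i _ => hlow i
  have hU : ∑ k : Fin (m*(a-1)), (univ.filter (fun i => F.Adj (vB i) (vA k))).card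
      ≤ m*(a-1) * b := by
    calc _ ≤ ∑ _k : Fin (m*(a-1)), b := Finset.sum_le_sum fun k _ => hup k
      _ = m*(a-1)*b := by simp [Finset.sum_const, mul_comm]
  have hfin : (m*b+1)*(a-1) ≤ m*(a-1)*b := le_trans hL (hsum ▸ hU)
  have hexp : (m*b+1)*(a-1) = m*(a-1)*b + (a-1) := by ring
  omega
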